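/- Let Ω ⊆ ℂ be a nonempty bounded open connected set, H₀ and H₁ complex Hilbert spaces, t₀ : Ω → H₀ a map whose range has dense linear span in H₀, t₁ : Ω → H₁ a map with t₁(w) ≠ 0 for all w ∈ Ω, and φ : Ω → ℂ a holomorphic function. Suppose X ∈ B(H₀,H₁) satisfies X(t₀(w)) = φ(w)·t₁(w) for all w ∈ Ω, and suppose that for every ε > 0 there exists δ > 0 such that every w ∈ Ω whose distance to the boundary of Ω is less than δ satisfies ‖t₀(w)‖ ≤ ε·‖t₁(w)‖. Then X = 0. -/

import Mathlib

/-- if `X t₀(w) = φ(w) • t₁(w)` on `Ω`, the span of the range of `t₀` is dense,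
`t₁` never vanishes, `φ` is holomorphic, and `‖t₀(w)‖/‖t₁(w)‖ → 0` as `w` approaches `∂Ω`,
then `X = 0`. -/
theorem stmt1 {H₀ H₁ : Type*}
    [NormedAddCommGroup H₀] [InnerProductSpace ℂ H₀]
    [NormedAddCommGroup H₁] [InnerProductSpace ℂ H₁]
    (Ω : Set ℂ) (hΩo : IsOpen Ω) (hΩc : IsConnected Ω) (hΩb : Bornology.IsBounded Ω)
    (t₀ : ℂ → H₀) (t₁ : ℂ → H₁) (φ : ℂ → ℂ)
    (hdense : Dense (Submodule.span ℂ (t₀ '' Ω) : Set H₀))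
    (ht₁ : ∀ w ∈ Ω, t₁ w ≠ 0)
    (hφ : DifferentiableOn ℂ φ Ω)
    (X : H₀ →L[ℂ] H₁)
    (hX : ∀ w ∈ Ω, X (t₀ w) = φ w • t₁ w)
    (hbd : ∀ ε > 0, ∃ δ > 0, ∀ w ∈ Ω,
      Metric.infDist w (frontier Ω) < δ → ‖t₀ w‖ ≤ ε * ‖t₁ w‖) :
    X = 0 := by
  -- Step 1: for every ε > 0, ‖φ z‖ ≤ ‖X‖ * ε on Ω
  have hφbd : ∀ ε > 0, ∀ z ∈ Ω, ‖φ z‖ ≤ ‖X‖ * ε := by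
    intro ε hε z hz
    obtain ⟨δ, hδ, hb⟩ := hbd ε hε
    have hnear : ∀ w ∈ Ω, Metric.infDist w (frontier Ω) < δ → ‖φ w‖ ≤ ‖X‖ * ε := by
      intro w hw hwd
      have ht : 0 < ‖t₁ w‖ := norm_pos_iff.2 (ht₁ w hw)
      have hmul : ‖φ w‖ * ‖t₁ w‖ ≤ (‖X‖ * ε) * ‖t₁ w‖ := by
        calc ‖φ w‖ * ‖t₁ w‖ = ‖X (t₀ w)‖ := by rw [hX w hw, norm_smul]
          _ ≤ ‖X‖ * ‖t₀ w‖ := X.le_opNorm _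
          _ ≤ ‖X‖ * (ε * ‖t₁ w‖) := by
              exact mul_le_mul_of_nonneg_left (hb w hw hwd) (norm_nonneg _)
          _ = (‖X‖ * ε) * ‖t₁ w‖ := by ring
      exact le_of_mul_le_mul_right hmul ht
    by_cases hzd : Metric.infDist z (frontier Ω) < δ
    · exact hnear z hz hzd
    · set s : Set ℂ := Ω ∩ {w | δ / 2 < Metric.infDist w (frontier Ω)} with hs
      have hso : IsOpen s :=
        hΩo.inter (isOpen_lt continuous_const (Metric.continuous_infDist_pt _))
      have hcl2 : closure s ⊆ {w | δ / 2 ≤ Metric.infDist w (frontier Ω)} :=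
        closure_minimal (fun x hx => show δ / 2 ≤ _ from le_of_lt hx.2)
          (isClosed_le continuous_const (Metric.continuous_infDist_pt _))
      have hclos : closure s ⊆ Ω := by
        intro x hx
        have h1 : x ∈ closure Ω := closure_mono Set.inter_subset_left hx
        by_contra hxΩ
        have hxf : x ∈ frontier Ω := ⟨h1, by rwa [hΩo.interior_eq]⟩
        have h0 : Metric.infDist x (frontier Ω) = 0 := Metric.infDist_zero_of_mem hxf
        have := hcl2 hx
        rw [Set.mem_setOf_eq, h0] at this
        linarith
      have hfront : ∀ x ∈ frontier s, ‖φ x‖ ≤ ‖X‖ * ε := by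
        intro x hx
        have hxΩ : x ∈ Ω := hclos hx.1
        have hxns : x ∉ s := fun hxs => hx.2 (by rw [hso.interior_eq]; exact hxs)
        have hle : Metric.infDist x (frontier Ω) ≤ δ / 2 := by
          by_contra h
          exact hxns ⟨hxΩ, lt_of_not_ge h⟩
        exact hnear x hxΩ (lt_of_le_of_lt hle (by linarith))
      have hzs : z ∈ s := ⟨hz, by simp only [Set.mem_setOf_eq]; linarith [le_of_not_gt hzd]⟩
      exact Complex.norm_le_of_forall_mem_frontier_norm_le (hΩb.subset Set.inter_subset_left)
        ((hφ.mono hclos).diffContOnCl) hfront (subset_closure hzs)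
  -- Step 2: φ = 0 on Ω
  have hφ0 : ∀ z ∈ Ω, φ z = 0 := by
    intro z hz
    have key : ∀ ε > 0, ‖φ z‖ ≤ ε := by
      intro ε hε
      have hε' : 0 < ε / (‖X‖ + 1) := by positivity
      have h1 := hφbd _ hε' z hz
      have h2 : ‖X‖ * (ε / (‖X‖ + 1)) ≤ ε := by
        calc ‖X‖ * (ε / (‖X‖ + 1)) ≤ (‖X‖ + 1) * (ε / (‖X‖ + 1)) :=
              mul_le_mul_of_nonneg_right (by linarith) hε'.le
          _ = ε := by field_simp
      linarith
    have h0 : ‖φ z‖ ≤ 0 := by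
      by_contra h
      have hpos : 0 < ‖φ z‖ := lt_of_not_ge h
      have := key (‖φ z‖ / 2) (by linarith)
      linarith
    exact norm_le_zero_iff.1 h0
  -- Step 3: X vanishes on the span of the range of t₀, hence everywhere by density.
  have hker : (Submodule.span ℂ (t₀ '' Ω)) ≤ LinearMap.ker (X : H₀ →ₗ[ℂ] H₁) := by
    rw [Submodule.span_le]
    rintro _ ⟨w, hw, rfl⟩
    simp [LinearMap.mem_ker, hX w hw, hφ0 w hw]
  ext x
  have hx : x ∈ closure (Submodule.span ℂ (t₀ '' Ω) : Set H₀) := hdense x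
  have hsub : (Submodule.span ℂ (t₀ '' Ω) : Set H₀) ⊆ (LinearMap.ker (X : H₀ →ₗ[ℂ] H₁) : Set H₀) := hker
  have hxker : x ∈ (LinearMap.ker (X : H₀ →ₗ[ℂ] H₁) : Set H₀) :=
    closure_minimal hsub (ContinuousLinearMap.isClosed_ker X) hx
  simpa using hxker
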